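/- (Lemma 2.7, first identity.) In the polarized setting, if F is holomorphic on the open set Ω ⊆ ℂ⁴, F_{z₁ζ₁} vanishes nowhere on Ω, and the constant Levi rank 1 identity F_{z₁ζ₁}F_{z₂ζ₂} − F_{z₂ζ₁}F_{z₁ζ₂} ≡ 0 holds on Ω, then 𝒦(k̄) ≡ 0 on Ω, i.e. k·∂_{z₁}(k̄) + ∂_{z₂}(k̄) = 0, where k := −F_{z₂ζ₁}/F_{z₁ζ₁} and k̄ := −F_{z₁ζ₂}/F_{z₁ζ₁}. -/

import Mathlib

open Complex

noncomputable section

/-- Partial derivative with respect to `z₁`, the first coordinate of `(z₁, z₂, ζ₁, ζ₂) ∈ ℂ⁴`. -/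
def pz1 (G : ℂ × ℂ × ℂ × ℂ → ℂ) (q : ℂ × ℂ × ℂ × ℂ) : ℂ :=
  deriv (fun s => G (s, q.2.1, q.2.2.1, q.2.2.2)) q.1

/-- Partial derivative with respect to `z₂`. -/
def pz2 (G : ℂ × ℂ × ℂ × ℂ → ℂ) (q : ℂ × ℂ × ℂ × ℂ) : ℂ :=
  deriv (fun s => G (q.1, s, q.2.2.1, q.2.2.2)) q.2.1

/-- Partial derivative with respect to `ζ₁`. -/
def pc1 (G : ℂ × ℂ × ℂ × ℂ → ℂ) (q : ℂ × ℂ × ℂ × ℂ) : ℂ :=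
  deriv (fun s => G (q.1, q.2.1, s, q.2.2.2)) q.2.2.1

/-- Partial derivative with respect to `ζ₂`. -/
def pc2 (G : ℂ × ℂ × ℂ × ℂ → ℂ) (q : ℂ × ℂ × ℂ × ℂ) : ℂ :=
  deriv (fun s => G (q.1, q.2.1, q.2.2.1, s)) q.2.2.2

namespace KkbarAux

abbrev V4 := ℂ × ℂ × ℂ × ℂ

/-- Directional derivative of `G` at `p` in direction `v`. -/
def Dd (v : V4) (G : V4 → ℂ) (p : V4) : ℂ := fderiv ℂ G p v

lemma hasDerivAt_slice1 {G : V4 → ℂ} {q : V4} (hG : DifferentiableAt ℂ G q) :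
    HasDerivAt (fun s => G (s, q.2.1, q.2.2.1, q.2.2.2)) (Dd (1,0,0,0) G q) q.1 :=
  hG.hasFDerivAt.comp_hasDerivAt q.1 (HasDerivAt.prodMk (hasDerivAt_id q.1) (hasDerivAt_const _ _))

lemma hasDerivAt_slice2 {G : V4 → ℂ} {q : V4} (hG : DifferentiableAt ℂ G q) :
    HasDerivAt (fun s => G (q.1, s, q.2.2.1, q.2.2.2)) (Dd (0,1,0,0) G q) q.2.1 :=
  hG.hasFDerivAt.comp_hasDerivAt q.2.1
    (HasDerivAt.prodMk (hasDerivAt_const _ _) (HasDerivAt.prodMk (hasDerivAt_id _) (hasDerivAt_const _ _)))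

lemma hasDerivAt_slice3 {G : V4 → ℂ} {q : V4} (hG : DifferentiableAt ℂ G q) :
    HasDerivAt (fun s => G (q.1, q.2.1, s, q.2.2.2)) (Dd (0,0,1,0) G q) q.2.2.1 :=
  hG.hasFDerivAt.comp_hasDerivAt q.2.2.1
    (HasDerivAt.prodMk (hasDerivAt_const _ _) (HasDerivAt.prodMk (hasDerivAt_const _ _)
      (HasDerivAt.prodMk (hasDerivAt_id _) (hasDerivAt_const _ _))))

lemma hasDerivAt_slice4 {G : V4 → ℂ} {q : V4} (hG : DifferentiableAt ℂ G q) :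
    HasDerivAt (fun s => G (q.1, q.2.1, q.2.2.1, s)) (Dd (0,0,0,1) G q) q.2.2.2 :=
  hG.hasFDerivAt.comp_hasDerivAt q.2.2.2
    (HasDerivAt.prodMk (hasDerivAt_const _ _) (HasDerivAt.prodMk (hasDerivAt_const _ _)
      (HasDerivAt.prodMk (hasDerivAt_const _ _) (hasDerivAt_id _))))

lemma pz1_eq {G : V4 → ℂ} {q : V4} (hG : DifferentiableAt ℂ G q) :
    pz1 G q = Dd (1,0,0,0) G q := (hasDerivAt_slice1 hG).deriv

lemma pz2_eq {G : V4 → ℂ} {q : V4} (hG : DifferentiableAt ℂ G q) :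
    pz2 G q = Dd (0,1,0,0) G q := (hasDerivAt_slice2 hG).deriv

lemma pc1_eq {G : V4 → ℂ} {q : V4} (hG : DifferentiableAt ℂ G q) :
    pc1 G q = Dd (0,0,1,0) G q := (hasDerivAt_slice3 hG).deriv

lemma pc2_eq {G : V4 → ℂ} {q : V4} (hG : DifferentiableAt ℂ G q) :
    pc2 G q = Dd (0,0,0,1) G q := (hasDerivAt_slice4 hG).deriv

lemma pz1_congr {U : Set V4} (hU : IsOpen U) {H₁ H₂ : V4 → ℂ} {q : V4}
    (h : ∀ p ∈ U, H₁ p = H₂ p) (hq : q ∈ U) : pz1 H₁ q = pz1 H₂ q := by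
  unfold pz1
  apply Filter.EventuallyEq.deriv_eq
  have hc : ContinuousAt (fun s : ℂ => ((s, q.2.1, q.2.2.1, q.2.2.2) : V4)) q.1 := by fun_prop
  filter_upwards [hc.preimage_mem_nhds (hU.mem_nhds hq)] with s hs using h _ hs

lemma pz2_congr {U : Set V4} (hU : IsOpen U) {H₁ H₂ : V4 → ℂ} {q : V4}
    (h : ∀ p ∈ U, H₁ p = H₂ p) (hq : q ∈ U) : pz2 H₁ q = pz2 H₂ q := by
  unfold pz2
  apply Filter.EventuallyEq.deriv_eq
  have hc : ContinuousAt (fun s : ℂ => ((q.1, s, q.2.2.1, q.2.2.2) : V4)) q.2.1 := by fun_prop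
  filter_upwards [hc.preimage_mem_nhds (hU.mem_nhds hq)] with s hs using h _ hs

lemma pc1_congr {U : Set V4} (hU : IsOpen U) {H₁ H₂ : V4 → ℂ} {q : V4}
    (h : ∀ p ∈ U, H₁ p = H₂ p) (hq : q ∈ U) : pc1 H₁ q = pc1 H₂ q := by
  unfold pc1
  apply Filter.EventuallyEq.deriv_eq
  have hc : ContinuousAt (fun s : ℂ => ((q.1, q.2.1, s, q.2.2.2) : V4)) q.2.2.1 := by fun_prop
  filter_upwards [hc.preimage_mem_nhds (hU.mem_nhds hq)] with s hs using h _ hs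

lemma pc2_congr {U : Set V4} (hU : IsOpen U) {H₁ H₂ : V4 → ℂ} {q : V4}
    (h : ∀ p ∈ U, H₁ p = H₂ p) (hq : q ∈ U) : pc2 H₁ q = pc2 H₂ q := by
  unfold pc2
  apply Filter.EventuallyEq.deriv_eq
  have hc : ContinuousAt (fun s : ℂ => ((q.1, q.2.1, q.2.2.1, s) : V4)) q.2.2.2 := by fun_prop
  filter_upwards [hc.preimage_mem_nhds (hU.mem_nhds hq)] with s hs using h _ hs

lemma analytic_Dd {U : Set V4} {G : V4 → ℂ} (hG : AnalyticOnNhd ℂ G U) (v : V4) :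
    AnalyticOnNhd ℂ (Dd v G) U :=
  (ContinuousLinearMap.apply ℂ ℂ v).comp_analyticOnNhd hG.fderiv

lemma Dd_congr {U : Set V4} (hU : IsOpen U) {H₁ H₂ : V4 → ℂ} {q : V4}
    (h : ∀ p ∈ U, H₁ p = H₂ p) (hq : q ∈ U) (v : V4) : Dd v H₁ q = Dd v H₂ q := by
  unfold Dd
  rw [Filter.EventuallyEq.fderiv_eq (Filter.eventuallyEq_of_mem (hU.mem_nhds hq) h)]

lemma fderiv_swap {G : V4 → ℂ} {q : V4} (hG : AnalyticAt ℂ G q) (v w : V4) :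
    Dd v (Dd w G) q = Dd w (Dd v G) q := by
  have hd : DifferentiableAt ℂ (fderiv ℂ G) q := hG.fderiv.differentiableAt
  have key : ∀ u₁ u₂ : V4, Dd u₂ (Dd u₁ G) q = fderiv ℂ (fderiv ℂ G) q u₂ u₁ := by
    intro u₁ u₂
    have h := (hd.hasFDerivAt.clm_apply (hasFDerivAt_const u₁ q)).fderiv
    show fderiv ℂ (fun p => fderiv ℂ G p u₁) q u₂ = _
    rw [h]; simp
  rw [key, key]
  exact (hG.contDiffAt.isSymmSndFDerivAt (n := 2) (by simp)).eq v w

end KkbarAux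

open KkbarAux

/-- Lemma 2.7, first identity: in the polarized setting, for `F` holomorphic on an open
`Ω ⊆ ℂ⁴` with nonvanishing `F_{z₁ζ₁}` and vanishing Levi determinant, one has `𝒦(k̄) ≡ 0`
on `Ω`, where `k = −F_{z₂ζ₁}/F_{z₁ζ₁}`, `k̄ = −F_{z₁ζ₂}/F_{z₁ζ₁}` and `𝒦 = k∂_{z₁} + ∂_{z₂}`. -/
theorem K_kbar_vanishes (Ω : Set (ℂ × ℂ × ℂ × ℂ)) (hΩ : IsOpen Ω)
    (F : ℂ × ℂ × ℂ × ℂ → ℂ) (hF : AnalyticOnNhd ℂ F Ω)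
    (hne : ∀ q ∈ Ω, pc1 (pz1 F) q ≠ 0)
    (hLevi : ∀ q ∈ Ω, pc1 (pz1 F) q * pc2 (pz2 F) q - pc1 (pz2 F) q * pc2 (pz1 F) q = 0)
    (k kbar : ℂ × ℂ × ℂ × ℂ → ℂ)
    (hk : k = fun q => -(pc1 (pz2 F) q) / pc1 (pz1 F) q)
    (hkbar : kbar = fun q => -(pc2 (pz1 F) q) / pc1 (pz1 F) q) :
    ∀ q ∈ Ω, k q * pz1 kbar q + pz2 kbar q = 0 := by
  subst hk hkbar
  intro q hq
  set e1 : V4 := (1,0,0,0) with he1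
  set e2 : V4 := (0,1,0,0) with he2
  set e3 : V4 := (0,0,1,0) with he3
  set e4 : V4 := (0,0,0,1) with he4
  have hF1 : AnalyticOnNhd ℂ (Dd e1 F) Ω := analytic_Dd hF e1
  have hF2 : AnalyticOnNhd ℂ (Dd e2 F) Ω := analytic_Dd hF e2
  set a : V4 → ℂ := Dd e3 (Dd e1 F) with ha_def
  set b : V4 → ℂ := Dd e3 (Dd e2 F) with hb_def
  set c : V4 → ℂ := Dd e4 (Dd e1 F) with hc_def
  set d : V4 → ℂ := Dd e4 (Dd e2 F) with hd_def
  have haA : AnalyticOnNhd ℂ a Ω := analytic_Dd hF1 e3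
  have hbA : AnalyticOnNhd ℂ b Ω := analytic_Dd hF2 e3
  have hcA : AnalyticOnNhd ℂ c Ω := analytic_Dd hF1 e4
  have hdA : AnalyticOnNhd ℂ d Ω := analytic_Dd hF2 e4
  have ha' : DifferentiableAt ℂ a q := (haA q hq).differentiableAt
  have hb' : DifferentiableAt ℂ b q := (hbA q hq).differentiableAt
  have hc' : DifferentiableAt ℂ c q := (hcA q hq).differentiableAt
  have hd' : DifferentiableAt ℂ d q := (hdA q hq).differentiableAt
  have hpz1F : ∀ p ∈ Ω, pz1 F p = Dd e1 F p := fun p hp => pz1_eq (hF p hp).differentiableAt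
  have hpz2F : ∀ p ∈ Ω, pz2 F p = Dd e2 F p := fun p hp => pz2_eq (hF p hp).differentiableAt
  have hA : ∀ p ∈ Ω, pc1 (pz1 F) p = a p := fun p hp => by
    rw [pc1_congr hΩ hpz1F hp, pc1_eq (hF1 p hp).differentiableAt]
  have hB : ∀ p ∈ Ω, pc1 (pz2 F) p = b p := fun p hp => by
    rw [pc1_congr hΩ hpz2F hp, pc1_eq (hF2 p hp).differentiableAt]
  have hC : ∀ p ∈ Ω, pc2 (pz1 F) p = c p := fun p hp => by
    rw [pc2_congr hΩ hpz1F hp, pc2_eq (hF1 p hp).differentiableAt]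
  have hD : ∀ p ∈ Ω, pc2 (pz2 F) p = d p := fun p hp => by
    rw [pc2_congr hΩ hpz2F hp, pc2_eq (hF2 p hp).differentiableAt]
  have haq : a q ≠ 0 := by rw [← hA q hq]; exact hne q hq
  have hkb : ∀ p ∈ Ω, (fun p => -(pc2 (pz1 F) p) / pc1 (pz1 F) p) p = -(c p) / a p := by
    intro p hp; simp only; rw [hC p hp, hA p hp]
  -- the two slice derivatives of k̄
  have hPZ1 : pz1 (fun p => -(pc2 (pz1 F) p) / pc1 (pz1 F) p) q
      = (-(Dd e1 c q) * a q - -(c q) * Dd e1 a q) / a q ^ 2 := by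
    rw [pz1_congr hΩ hkb hq]
    exact ((hasDerivAt_slice1 hc').neg.div (hasDerivAt_slice1 ha') haq).deriv
  have hPZ2 : pz2 (fun p => -(pc2 (pz1 F) p) / pc1 (pz1 F) p) q
      = (-(Dd e2 c q) * a q - -(c q) * Dd e2 a q) / a q ^ 2 := by
    rw [pz2_congr hΩ hkb hq]
    exact ((hasDerivAt_slice2 hc').neg.div (hasDerivAt_slice2 ha') haq).deriv
  -- symmetry of mixed partials
  have hswap12 : ∀ p ∈ Ω, Dd e2 (Dd e1 F) p = Dd e1 (Dd e2 F) p :=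
    fun p hp => fderiv_swap (hF p hp) e2 e1
  have hsymC : Dd e2 c q = Dd e1 d q := by
    calc Dd e2 (Dd e4 (Dd e1 F)) q
        = Dd e4 (Dd e2 (Dd e1 F)) q := fderiv_swap (hF1 q hq) e2 e4
      _ = Dd e4 (Dd e1 (Dd e2 F)) q := Dd_congr hΩ hswap12 hq e4
      _ = Dd e1 (Dd e4 (Dd e2 F)) q := fderiv_swap (hF2 q hq) e4 e1
  have hsymA : Dd e2 a q = Dd e1 b q := by
    calc Dd e2 (Dd e3 (Dd e1 F)) q
        = Dd e3 (Dd e2 (Dd e1 F)) q := fderiv_swap (hF1 q hq) e2 e3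
      _ = Dd e3 (Dd e1 (Dd e2 F)) q := Dd_congr hΩ hswap12 hq e3
      _ = Dd e1 (Dd e3 (Dd e2 F)) q := fderiv_swap (hF2 q hq) e3 e1
  -- the Levi identity and its derivative
  have hLv : ∀ p ∈ Ω, a p * d p - b p * c p = 0 := by
    intro p hp
    rw [← hA p hp, ← hB p hp, ← hC p hp, ← hD p hp]
    exact hLevi p hp
  have hDL : a q * Dd e1 d q + d q * Dd e1 a q - (b q * Dd e1 c q + c q * Dd e1 b q) = 0 := by
    have hP : HasFDerivAt (fun p => a p * d p - b p * c p)
        ((a q • fderiv ℂ d q + d q • fderiv ℂ a q)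
          - (b q • fderiv ℂ c q + c q • fderiv ℂ b q)) q :=
      (ha'.hasFDerivAt.mul hd'.hasFDerivAt).sub (hb'.hasFDerivAt.mul hc'.hasFDerivAt)
    have h0 : fderiv ℂ (fun p => a p * d p - b p * c p) q = 0 := by
      have hev : (fun p => a p * d p - b p * c p) =ᶠ[nhds q] (fun _ => 0) :=
        Filter.eventuallyEq_of_mem (hΩ.mem_nhds hq) hLv
      rw [hev.fderiv_eq]
      exact fderiv_const_apply 0
    have heq := hP.fderiv
    rw [h0] at heq
    have h3 := congrArg (fun L : V4 →L[ℂ] ℂ => L e1) heq.symm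
    simpa [Dd] using h3
  -- put everything together
  show (-(pc1 (pz2 F) q) / pc1 (pz1 F) q) * _ + _ = 0
  rw [hB q hq, hA q hq, hPZ1, hPZ2, hsymC, hsymA]
  have hLvq := hLv q hq
  have key : b q * Dd e1 c q * a q - b q * c q * Dd e1 a q - Dd e1 d q * a q ^ 2
      + c q * Dd e1 b q * a q = 0 := by
    linear_combination (-(a q)) * hDL + (Dd e1 a q) * hLvq
  field_simp
  linear_combination key
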